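/- Let A be an n×n real symmetric matrix, λ ≠ 0 an eigenvalue of A with unit eigenvector x (Ax = λx, ‖x‖ = 1), and ẽ ∈ ℝⁿ a unit vector orthogonal to x. For a vector u with uᵀAu ≠ 0, let α(u) = [uᵀA²u − uᵀu + √((uᵀA²u − uᵀu)² + 4(uᵀAu)²)]/(2uᵀAu). Then α(x + εẽ) is defined for all sufficiently small ε > 0 and satisfies α(x + εẽ) − λ − ε² · (λ/(λ² + 1)) · ẽᵀ(A + λ⁻¹I)(A − λI)ẽ = O(ε⁴) as ε → 0⁺. -/

import Mathlib

open Matrix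

set_option maxHeartbeats 1600000 in
lemma key_scalar (lam q r : ℝ) (hlam : lam ≠ 0) :
    ∃ C δ : ℝ, 0 < C ∧ 0 < δ ∧ ∀ ε : ℝ, 0 < ε → ε < δ →
      lam + ε^2 * q ≠ 0 ∧
      |((lam^2 + ε^2 * r) - (1 + ε^2) +
          Real.sqrt (((lam^2 + ε^2 * r) - (1 + ε^2))^2 + 4 * (lam + ε^2 * q)^2)) /
          (2 * (lam + ε^2 * q)) -
        lam - ε^2 * ((lam / (lam^2 + 1)) * (r + (lam⁻¹ - lam) * q - 1))| ≤ C * ε^4 := by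
  have h1 : (0:ℝ) < lam^2 + 1 := by positivity
  have h1' : (lam:ℝ)^2 + 1 ≠ 0 := ne_of_gt h1
  have hlpos : (0:ℝ) < |lam| := abs_pos.mpr hlam
  obtain ⟨T, hT⟩ : ∃ t : ℝ, t = (lam*(r-1) + (1-lam^2)*q)/(lam^2+1) := ⟨_, rfl⟩
  have hTeq : (lam / (lam^2 + 1)) * (r + (lam⁻¹ - lam) * q - 1) = T := by
    rw [hT]; field_simp; ring
  obtain ⟨P1, hP1⟩ : ∃ t : ℝ, t = 2*lam*T + 2*lam*q - (r-1) := ⟨_, rfl⟩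
  obtain ⟨P2, hP2⟩ : ∃ t : ℝ, t = 2*q*T := ⟨_, rfl⟩
  obtain ⟨c2, hc2⟩ : ∃ t : ℝ, t = (r-1)^2 + 4*q^2 - P1^2 - 2*(lam^2+1)*P2 := ⟨_, rfl⟩
  obtain ⟨c3, hc3⟩ : ∃ t : ℝ, t = -(2*P1*P2) := ⟨_, rfl⟩
  obtain ⟨c4, hc4⟩ : ∃ t : ℝ, t = -(P2^2) := ⟨_, rfl⟩
  obtain ⟨M, hM⟩ : ∃ t : ℝ, t = |c2| + |c3| + |c4| + 1 := ⟨_, rfl⟩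
  have hM1 : (1:ℝ) ≤ M := by
    have := abs_nonneg c2; have := abs_nonneg c3; have := abs_nonneg c4
    rw [hM]; linarith
  have hMpos : (0:ℝ) < M := by linarith
  refine ⟨2*M/((lam^2+1)*|lam|),
    min 1 (min (|lam|/(2*(|q|+1))) ((lam^2+1)/(2*(|P1|+|P2|+1)))), by positivity, ?_, ?_⟩
  · have hq1 : (0:ℝ) < |q| + 1 := by positivity
    have hP12 : (0:ℝ) < |P1| + |P2| + 1 := by positivity
    positivity
  intro ε hε hεδ
  have hε1 : ε ≤ 1 := (lt_of_lt_of_le hεδ (min_le_left _ _)).le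
  have hεq : ε < |lam|/(2*(|q|+1)) :=
    lt_of_lt_of_le hεδ (le_trans (min_le_right _ _) (min_le_left _ _))
  have hεP : ε < (lam^2+1)/(2*(|P1|+|P2|+1)) :=
    lt_of_lt_of_le hεδ (le_trans (min_le_right _ _) (min_le_right _ _))
  have hε2 : ε^2 ≤ ε := by
    calc ε^2 = ε*ε := by ring
      _ ≤ ε*1 := mul_le_mul_of_nonneg_left hε1 hε.le
      _ = ε := mul_one ε
  have hε21 : ε^2 ≤ 1 := le_trans hε2 hε1
  have hε4 : ε^4 ≤ ε^2 := by
    calc ε^4 = ε^2*ε^2 := by ring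
      _ ≤ ε^2*1 := mul_le_mul_of_nonneg_left hε21 (sq_nonneg ε)
      _ = ε^2 := mul_one _
  have hε4' : ε^4 ≤ ε := le_trans hε4 hε2
  have hε41 : ε^4 ≤ 1 := le_trans hε4 hε21
  -- bound on a
  have hq1 : (0:ℝ) < |q| + 1 := by positivity
  have hqsmall : ε^2 * |q| ≤ |lam|/2 := by
    have h' : ε * (2*(|q|+1)) < |lam| := (lt_div_iff₀ (by positivity)).mp hεq
    have hd : ε * (2*(|q|+1)) = 2*(ε*|q|) + 2*ε := by ring
    have t1 : ε^2 * |q| ≤ ε * |q| := mul_le_mul_of_nonneg_right hε2 (abs_nonneg q)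
    linarith only [h', hd, t1, hε.le]
  have ha : |lam|/2 ≤ |lam + ε^2*q| := by
    have habs : |lam| ≤ |lam + ε^2*q| + |ε^2*q| := by
      have := abs_add_le (lam + ε^2*q) (-(ε^2*q)); simpa using this
    have : |ε^2*q| = ε^2*|q| := by rw [abs_mul, abs_of_nonneg (by positivity : (0:ℝ) ≤ ε^2)]
    linarith
  have hane : lam + ε^2*q ≠ 0 := by
    intro h; rw [h] at ha; simp at ha; linarith
  refine ⟨hane, ?_⟩
  -- notation
  obtain ⟨s, hs⟩ : ∃ t : ℝ, t = lam^2 - 1 + ε^2*(r-1) := ⟨_, rfl⟩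
  obtain ⟨a, haa⟩ : ∃ t : ℝ, t = lam + ε^2*q := ⟨_, rfl⟩
  obtain ⟨P, hP⟩ : ∃ t : ℝ, t = (lam^2+1) + ε^2*P1 + ε^4*P2 := ⟨_, rfl⟩
  obtain ⟨D, hD⟩ : ∃ t : ℝ, t = s^2 + 4*a^2 := ⟨_, rfl⟩
  have hseq : (lam^2 + ε^2 * r) - (1 + ε^2) = s := by rw [hs]; ring
  have haeq : lam + ε^2 * q = a := haa.symm
  have hane' : a ≠ 0 := by rw [haa]; exact hane
  have ha' : |lam|/2 ≤ |a| := by rw [haa]; exact ha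
  have hPa : P = 2*a*(lam + ε^2*T) - s := by
    rw [hP, hP1, hP2, haa, hs]; ring
  have hD0 : (0:ℝ) ≤ D := by rw [hD]; positivity
  have hsq : Real.sqrt D ^ 2 = D := Real.sq_sqrt hD0
  have hPlb : (lam^2+1)/2 ≤ P := by
    have h' : ε * (2*(|P1|+|P2|+1)) < lam^2+1 := (lt_div_iff₀ (by positivity)).mp hεP
    have hd : ε * (2*(|P1|+|P2|+1)) = 2*(ε*|P1|) + 2*(ε*|P2|) + 2*ε := by ring
    have e1 : ε^2*|P1| ≤ ε*|P1| := mul_le_mul_of_nonneg_right hε2 (abs_nonneg P1)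
    have e2 : ε^4*|P2| ≤ ε*|P2| := mul_le_mul_of_nonneg_right hε4' (abs_nonneg P2)
    have g1 : ε^2*(-|P1|) ≤ ε^2*P1 := mul_le_mul_of_nonneg_left (neg_abs_le P1) (sq_nonneg ε)
    have g1' : ε^2*(-|P1|) = -(ε^2*|P1|) := by ring
    have g2 : ε^4*(-|P2|) ≤ ε^4*P2 :=
      mul_le_mul_of_nonneg_left (neg_abs_le P2) (by positivity)
    have g2' : ε^4*(-|P2|) = -(ε^4*|P2|) := by ring
    rw [hP]
    linarith only [h', hd, e1, e2, g1, g1', g2, g2', hε.le]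
  have hSnn : (0:ℝ) ≤ Real.sqrt D := Real.sqrt_nonneg D
  have hSP : (lam^2+1)/2 ≤ Real.sqrt D + P := by linarith
  have hSPpos : (0:ℝ) < Real.sqrt D + P := by linarith
  have hident : D - P^2 = ε^4*(c2 + c3*ε^2 + c4*ε^4) := by
    rw [hD, hP, hs, haa, hc2, hc3, hc4, hP1, hP2, hT]
    field_simp
    ring
  have ha0 : (2*a) ≠ 0 := mul_ne_zero two_ne_zero hane'
  have hval : (s + Real.sqrt D)/(2*a) - lam - ε^2*T = (D - P^2)/((Real.sqrt D + P)*(2*a)) := by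
    have hprod : (Real.sqrt D - P) * (Real.sqrt D + P) = D - P^2 := by
      linear_combination hsq
    have hstep : Real.sqrt D - P = (D - P^2)/(Real.sqrt D + P) := by
      rw [← hprod, mul_div_cancel_right₀ _ (ne_of_gt hSPpos)]
    have hleft : (s + Real.sqrt D)/(2*a) - lam - ε^2*T = (Real.sqrt D - P)/(2*a) := by
      rw [hPa]; field_simp; ring
    rw [hleft, hstep, div_div]
  rw [hseq, haeq, hTeq, ← hD, hval]
  rw [abs_div]
  have hnum : |D - P^2| ≤ ε^4 * M := by
    rw [hident, abs_mul, abs_of_nonneg (by positivity : (0:ℝ) ≤ ε^4)]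
    have hb : |c2 + c3*ε^2 + c4*ε^4| ≤ |c2| + |c3| * ε^2 + |c4| * ε^4 := by
      calc |c2 + c3*ε^2 + c4*ε^4| ≤ |c2 + c3*ε^2| + |c4*ε^4| := abs_add_le _ _
        _ ≤ |c2| + |c3*ε^2| + |c4*ε^4| := by linarith [abs_add_le c2 (c3*ε^2)]
        _ = |c2| + |c3| * ε^2 + |c4| * ε^4 := by
            rw [abs_mul, abs_mul, abs_of_nonneg (by positivity : (0:ℝ) ≤ ε^2),
              abs_of_nonneg (by positivity : (0:ℝ) ≤ ε^4)]
    have h3 : |c3| * ε^2 ≤ |c3| := by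
      calc |c3| * ε^2 ≤ |c3| * 1 := mul_le_mul_of_nonneg_left hε21 (abs_nonneg c3)
        _ = |c3| := mul_one _
    have h4 : |c4| * ε^4 ≤ |c4| := by
      calc |c4| * ε^4 ≤ |c4| * 1 := mul_le_mul_of_nonneg_left hε41 (abs_nonneg c4)
        _ = |c4| := mul_one _
    have hb2 : |c2 + c3*ε^2 + c4*ε^4| ≤ M := by rw [hM]; linarith
    exact mul_le_mul_of_nonneg_left hb2 (by positivity)
  have hden : (lam^2+1)/2 * |lam| ≤ |(Real.sqrt D + P) * (2 * a)| := by
    rw [abs_mul, abs_of_pos hSPpos]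
    have h2a : |lam| ≤ |2 * a| := by
      rw [abs_mul]; simp only [abs_two]
      linarith [ha']
    calc (lam^2+1)/2 * |lam| ≤ (Real.sqrt D + P) * |lam| :=
          mul_le_mul_of_nonneg_right hSP (abs_nonneg lam)
      _ ≤ (Real.sqrt D + P) * |2 * a| :=
          mul_le_mul_of_nonneg_left h2a (le_of_lt hSPpos)
  have hdenpos : (0:ℝ) < (lam^2+1)/2 * |lam| := by positivity
  calc |D - P^2| / |(Real.sqrt D + P) * (2 * a)| ≤ (ε^4 * M) / ((lam^2+1)/2 * |lam|) :=
        div_le_div₀ (by positivity) hnum hdenpos hden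
    _ = 2*M/((lam^2+1)*|lam|) * ε^4 := by field_simp


/-- For an eigenpair `(λ, x)` of the symmetric matrix `A` with `λ ≠ 0`, `‖x‖ = 1`,
and a unit vector `ẽ ⊥ x`, the homogeneous Rayleigh quotient
`α(u) = [uᵀA²u − uᵀu + √((uᵀA²u − uᵀu)² + 4(uᵀAu)²)]/(2uᵀAu)` at `u = x + εẽ` is defined for
all sufficiently small `ε > 0` and satisfies
`α(x + εẽ) − λ − ε²·(λ/(λ²+1))·ẽᵀ(A + λ⁻¹I)(A − λI)ẽ = O(ε⁴)` as `ε → 0⁺`. -/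
theorem homogeneous_rq_second_order_expansion
    {n : ℕ} (A : Matrix (Fin n) (Fin n) ℝ) (hA : A.IsSymm)
    (lam : ℝ) (hlam : lam ≠ 0)
    (x : Fin n → ℝ) (hx : A.mulVec x = lam • x) (hxnorm : x ⬝ᵥ x = 1)
    (et : Fin n → ℝ) (hetnorm : et ⬝ᵥ et = 1) (horth : et ⬝ᵥ x = 0) :
    ∃ C δ : ℝ, 0 < C ∧ 0 < δ ∧ ∀ ε : ℝ, 0 < ε → ε < δ →
      (x + ε • et) ⬝ᵥ A.mulVec (x + ε • et) ≠ 0 ∧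
      |((x + ε • et) ⬝ᵥ (A * A).mulVec (x + ε • et) - (x + ε • et) ⬝ᵥ (x + ε • et) +
          Real.sqrt (((x + ε • et) ⬝ᵥ (A * A).mulVec (x + ε • et) -
              (x + ε • et) ⬝ᵥ (x + ε • et))^2 +
            4 * ((x + ε • et) ⬝ᵥ A.mulVec (x + ε • et))^2)) /
          (2 * ((x + ε • et) ⬝ᵥ A.mulVec (x + ε • et))) -
        lam - ε^2 * ((lam / (lam^2 + 1)) *
          (et ⬝ᵥ ((A + lam⁻¹ • (1 : Matrix (Fin n) (Fin n) ℝ)) *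
            (A - lam • (1 : Matrix (Fin n) (Fin n) ℝ))).mulVec et))| ≤ C * ε^4 := by
  have hsymm : ∀ (B : Matrix (Fin n) (Fin n) ℝ), B.IsSymm →
      ∀ v w : Fin n → ℝ, v ⬝ᵥ B.mulVec w = w ⬝ᵥ B.mulVec v := by
    intro B hB v w
    rw [dotProduct_mulVec, ← Matrix.mulVec_transpose, hB.eq, dotProduct_comm]
  have hAAsymm : (A*A).IsSymm := by
    rw [Matrix.IsSymm, transpose_mul, hA.eq]
  have hxet : x ⬝ᵥ et = 0 := by rw [dotProduct_comm]; exact horth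
  have hetAx : et ⬝ᵥ A.mulVec x = 0 := by simp [hx, horth]
  have hxAet : x ⬝ᵥ A.mulVec et = 0 := by rw [hsymm A hA]; exact hetAx
  have hAAx : (A*A).mulVec x = (lam*lam) • x := by
    rw [← mulVec_mulVec, hx, mulVec_smul, hx, smul_smul]
  have hetAAx : et ⬝ᵥ (A*A).mulVec x = 0 := by simp [hAAx, horth]
  have hxAAet : x ⬝ᵥ (A*A).mulVec et = 0 := by rw [hsymm (A*A) hAAsymm]; exact hetAAx
  obtain ⟨q, hq⟩ : ∃ t : ℝ, t = et ⬝ᵥ A.mulVec et := ⟨_, rfl⟩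
  obtain ⟨r, hr⟩ : ∃ t : ℝ, t = et ⬝ᵥ A.mulVec (A.mulVec et) := ⟨_, rfl⟩
  have hq' : et ⬝ᵥ A.mulVec et = q := hq.symm
  have hr' : et ⬝ᵥ (A*A).mulVec et = r := by rw [hr, mulVec_mulVec]
  have h_a : ∀ ε : ℝ, (x + ε • et) ⬝ᵥ A.mulVec (x + ε • et) = lam + ε^2 * q := by
    intro ε
    simp only [mulVec_add, mulVec_smul, dotProduct_add, add_dotProduct, dotProduct_smul,
      smul_dotProduct, smul_eq_mul, hx, hxAet, hetAx, hq', hxnorm, horth, hxet]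
    simp [hxnorm, horth, hxet]
    ring
  have h_b : ∀ ε : ℝ, (x + ε • et) ⬝ᵥ (A*A).mulVec (x + ε • et) = lam^2 + ε^2 * r := by
    intro ε
    simp only [mulVec_add, mulVec_smul, dotProduct_add, add_dotProduct, dotProduct_smul,
      smul_dotProduct, smul_eq_mul, hAAx, hxAAet, hetAAx, hr', hxnorm, horth, hxet]
    simp [hxnorm, horth, hxet]
    ring
  have h_c : ∀ ε : ℝ, (x + ε • et) ⬝ᵥ (x + ε • et) = 1 + ε^2 := by
    intro ε
    simp [dotProduct_add, add_dotProduct, dotProduct_smul, smul_dotProduct, smul_eq_mul,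
      hxnorm, hetnorm, horth, hxet]
    ring
  have h_T : et ⬝ᵥ ((A + lam⁻¹ • (1 : Matrix (Fin n) (Fin n) ℝ)) *
      (A - lam • (1 : Matrix (Fin n) (Fin n) ℝ))).mulVec et = r + (lam⁻¹ - lam) * q - 1 := by
    rw [← mulVec_mulVec]
    simp only [sub_mulVec, add_mulVec, smul_mulVec, one_mulVec, mulVec_sub, mulVec_add,
      mulVec_smul, dotProduct_sub, dotProduct_add, dotProduct_smul, smul_eq_mul, hetnorm]
    rw [← hq, ← hr]
    field_simp
    ring
  obtain ⟨C, δ, hC, hδ, hkey⟩ := key_scalar lam q r hlam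
  refine ⟨C, δ, hC, hδ, fun ε hε hεδ => ?_⟩
  obtain ⟨h1, h2⟩ := hkey ε hε hεδ
  constructor
  · rw [h_a ε]; exact h1
  · rw [h_a ε, h_b ε, h_c ε, h_T]; exact h2
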